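/- Finite-alphabet mutual information bound (determinant form): Let A be a finite set, and for each e ∈ A let M_e be positive semidefinite and N_e ≥ 0 a cap. Define g(A) = min_{R⊆A} ( log det(I + Σ_{e∈A\R} M_e) + Σ_{e∈R} N_e ). Then g is a normalized, monotone, submodular function of A, i.e., a rank function. -/

import Mathlib

set_option maxHeartbeats 1600000
set_option linter.unusedSectionVars false

open Matrix

namespace CappedLogdetAux

variable {n : ℕ}

lemma psd_vecMulVec (v : Fin n → ℝ) : (vecMulVec v v).PosSemidef := by
  refine Matrix.PosSemidef.of_dotProduct_mulVec_nonneg ?_ ?_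
  · ext i j; simp [vecMulVec_apply, conjTranspose_apply, mul_comm]
  · intro x
    have h : vecMulVec v v *ᵥ x = (v ⬝ᵥ x) • v := by
      ext i
      simp [vecMulVec_apply, mulVec, dotProduct, Finset.mul_sum, mul_comm, mul_left_comm,
        mul_assoc]
    rw [h]
    simp only [star_trivial, dotProduct_smul]
    have : x ⬝ᵥ v = v ⬝ᵥ x := dotProduct_comm x v
    rw [smul_eq_mul, this]
    exact mul_self_nonneg _

lemma det_add_vecMulVec (P : Matrix (Fin n) (Fin n) ℝ) (hP : P.PosDef) (v : Fin n → ℝ) :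
    (P + vecMulVec v v).det = P.det * (1 + v ⬝ᵥ (P⁻¹ *ᵥ v)) := by
  rw [vecMulVec_eq Unit, det_add_replicateCol_mul_replicateRow hP.det_pos.ne'.isUnit]
  congr 1
  rw [det_unique]
  simp [Matrix.mul_apply, Matrix.replicateRow, Matrix.replicateCol, dotProduct, mulVec, Finset.sum_mul,
    Finset.mul_sum, mul_comm, mul_left_comm]
  refine Finset.sum_congr rfl fun x _ => Finset.sum_congr rfl fun i _ => ?_
  have h := hP.inv.isHermitian.apply i x
  rw [star_trivial] at h
  rw [h]

lemma quad_symm {P : Matrix (Fin n) (Fin n) ℝ} (hP : P.IsHermitian) (x y : Fin n → ℝ) :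
    x ⬝ᵥ (P *ᵥ y) = y ⬝ᵥ (P *ᵥ x) := by
  rw [dotProduct_mulVec x P y, dotProduct_comm, ← mulVec_transpose]
  have hT : Pᵀ = P := by rw [← conjTranspose_eq_transpose_of_trivial, hP.eq]
  rw [hT]

lemma quad_nonneg {P : Matrix (Fin n) (Fin n) ℝ} (hP : P.PosSemidef) (x : Fin n → ℝ) :
    0 ≤ x ⬝ᵥ (P *ᵥ x) := by simpa using hP.dotProduct_mulVec_nonneg x

lemma quad_inv_antitone (P A : Matrix (Fin n) (Fin n) ℝ) (hP : P.PosDef) (hA : A.PosSemidef)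
    (v : Fin n → ℝ) :
    v ⬝ᵥ ((P + A)⁻¹ *ᵥ v) ≤ v ⬝ᵥ (P⁻¹ *ᵥ v) := by
  set Q := P + A with hQdef
  have hQ : Q.PosDef := hP.add_posSemidef hA
  set w : Fin n → ℝ := Q⁻¹ *ᵥ v with hw
  have hv : Q *ᵥ w = v := by
    rw [hw, mulVec_mulVec, mul_nonsing_inv _ hQ.det_pos.ne'.isUnit, one_mulVec]
  set x : Fin n → ℝ := P⁻¹ *ᵥ v with hx
  have hvP : P *ᵥ x = v := by
    rw [hx, mulVec_mulVec, mul_nonsing_inv _ hP.det_pos.ne'.isUnit, one_mulVec]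
  set a : ℝ := w ⬝ᵥ (P *ᵥ w) with ha
  set s : ℝ := w ⬝ᵥ (Q *ᵥ w) with hs
  have hsa : a ≤ s := by
    rw [hs, hQdef, add_mulVec, dotProduct_add, ha]
    have := quad_nonneg hA w
    linarith
  have ha0 : 0 ≤ a := quad_nonneg hP.posSemidef w
  have hgoal1 : v ⬝ᵥ (Q⁻¹ *ᵥ v) = s := by
    calc v ⬝ᵥ (Q⁻¹ *ᵥ v) = v ⬝ᵥ w := by rw [hw]
    _ = (Q *ᵥ w) ⬝ᵥ w := by rw [hv]
    _ = w ⬝ᵥ (Q *ᵥ w) := dotProduct_comm _ _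
    _ = s := hs.symm
  set c : ℝ := x ⬝ᵥ (P *ᵥ x) with hc
  have hgoal2 : v ⬝ᵥ (P⁻¹ *ᵥ v) = c := by
    calc v ⬝ᵥ (P⁻¹ *ᵥ v) = v ⬝ᵥ x := by rw [hx]
    _ = (P *ᵥ x) ⬝ᵥ x := by rw [hvP]
    _ = x ⬝ᵥ (P *ᵥ x) := dotProduct_comm _ _
    _ = c := hc.symm
  have hc0 : 0 ≤ c := quad_nonneg hP.posSemidef x
  have hb : w ⬝ᵥ (P *ᵥ x) = s := by
    calc w ⬝ᵥ (P *ᵥ x) = w ⬝ᵥ v := by rw [hvP]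
    _ = w ⬝ᵥ (Q *ᵥ w) := by rw [hv]
    _ = s := hs.symm
  -- Cauchy-Schwarz via discriminant
  have hCS : s * s ≤ a * c := by
    have hquad : ∀ t : ℝ, 0 ≤ a * (t * t) + (2 * s) * t + c := by
      intro t
      have h0 := quad_nonneg hP.posSemidef (t • w + x)
      have hxw : x ⬝ᵥ (P *ᵥ w) = w ⬝ᵥ (P *ᵥ x) := quad_symm hP.isHermitian x w
      have e1 : P *ᵥ (t • w + x) = t • (P *ᵥ w) + P *ᵥ x := by
        rw [mulVec_add, mulVec_smul]
      rw [e1] at h0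
      simp only [dotProduct_add, add_dotProduct, dotProduct_smul, smul_dotProduct,
        smul_eq_mul] at h0
      rw [hxw, hb] at h0
      calc (0:ℝ) ≤ _ := h0
      _ = a * (t * t) + (2 * s) * t + c := by rw [ha, hc]; ring
    have hd := discrim_le_zero hquad
    rw [discrim] at hd
    nlinarith
  rw [hgoal1, hgoal2]
  rcases eq_or_lt_of_le ha0 with h | h
  · have hw0 : w = 0 := by
      by_contra hne
      exact absurd h.symm (ne_of_gt (by simpa using hP.dotProduct_mulVec_pos hne))
    have : s = 0 := by rw [hs, hw0]; simp
    rw [this]; exact hc0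
  · have hs0 : 0 ≤ s := le_trans ha0 hsa
    have h1 : a * s ≤ s * s := mul_le_mul_of_nonneg_right hsa hs0
    have h2 : a * s ≤ a * c := le_trans h1 hCS
    exact le_of_mul_le_mul_left h2 h

lemma psd_sum {α : Type*} (s : Finset α) (f : α → Matrix (Fin n) (Fin n) ℝ)
    (hf : ∀ i ∈ s, (f i).PosSemidef) : (∑ i ∈ s, f i).PosSemidef := by
  classical
  induction s using Finset.induction_on with
  | empty => simpa using Matrix.PosSemidef.zero
  | insert a t hx ih =>
    rw [Finset.sum_insert hx]
    exact (hf a (Finset.mem_insert_self a t)).add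
      (ih fun i hi => hf i (Finset.mem_insert_of_mem hi))

lemma psd_decomp {A : Matrix (Fin n) (Fin n) ℝ} (hA : A.PosSemidef) :
    ∃ V : Fin n → (Fin n → ℝ), A = ∑ i : Fin n, vecMulVec (V i) (V i) := by
  obtain ⟨B, hB⟩ : ∃ B : Matrix (Fin n) (Fin n) ℝ, A = Bᴴ * B := by
    open scoped MatrixOrder in
    exact CStarAlgebra.nonneg_iff_eq_star_mul_self.mp hA.nonneg
  refine ⟨fun i => B i, ?_⟩
  ext j k
  rw [hB]
  simp [Matrix.mul_apply, conjTranspose_apply, vecMulVec_apply, Matrix.sum_apply]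

lemma posDef_add_sum (P : Matrix (Fin n) (Fin n) ℝ) (hP : P.PosDef)
    (V : Fin n → (Fin n → ℝ)) (s : Finset (Fin n)) :
    (P + ∑ i ∈ s, vecMulVec (V i) (V i)).PosDef :=
  hP.add_posSemidef (psd_sum s _ fun i _ => psd_vecMulVec (V i))

lemma det_le_det_add_sum (P : Matrix (Fin n) (Fin n) ℝ) (hP : P.PosDef)
    (V : Fin n → (Fin n → ℝ)) (s : Finset (Fin n)) :
    P.det ≤ (P + ∑ i ∈ s, vecMulVec (V i) (V i)).det := by
  classical
  induction s using Finset.induction_on with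
  | empty => simp
  | insert a t hx ih =>
    have hPt := posDef_add_sum P hP V t
    rw [Finset.sum_insert hx]
    have e : P + (vecMulVec (V a) (V a) + ∑ i ∈ t, vecMulVec (V i) (V i))
        = (P + ∑ i ∈ t, vecMulVec (V i) (V i)) + vecMulVec (V a) (V a) := by abel
    rw [e, det_add_vecMulVec _ hPt]
    have h1 : 0 ≤ (V a) ⬝ᵥ ((P + ∑ i ∈ t, vecMulVec (V i) (V i))⁻¹ *ᵥ (V a)) :=
      quad_nonneg hPt.inv.posSemidef _
    nlinarith [hPt.det_pos, ih]

lemma det_le_det_add (P A : Matrix (Fin n) (Fin n) ℝ) (hP : P.PosDef) (hA : A.PosSemidef) :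
    P.det ≤ (P + A).det := by
  obtain ⟨V, hV⟩ := psd_decomp hA
  rw [hV]
  exact det_le_det_add_sum P hP V Finset.univ

lemma det_submodular (P A B : Matrix (Fin n) (Fin n) ℝ) (hP : P.PosDef)
    (hA : A.PosSemidef) (hB : B.PosSemidef) :
    (P + A + B).det * P.det ≤ (P + A).det * (P + B).det := by
  classical
  obtain ⟨V, hV⟩ := psd_decomp hB
  rw [hV]
  induction (Finset.univ : Finset (Fin n)) using Finset.induction_on with
  | empty => simp
  | insert a t hx ih =>
    set C : Matrix (Fin n) (Fin n) ℝ := ∑ i ∈ t, vecMulVec (V i) (V i) with hC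
    have hCpsd : C.PosSemidef := psd_sum t _ fun i _ => psd_vecMulVec (V i)
    have hPC : (P + C).PosDef := hP.add_posSemidef hCpsd
    have hPAC : (P + A + C).PosDef := (hP.add_posSemidef hA).add_posSemidef hCpsd
    have hPA : (P + A).PosDef := hP.add_posSemidef hA
    rw [Finset.sum_insert hx, ← hC]
    have e1 : P + A + (vecMulVec (V a) (V a) + C) = (P + A + C) + vecMulVec (V a) (V a) := by
      abel
    have e2 : P + (vecMulVec (V a) (V a) + C) = (P + C) + vecMulVec (V a) (V a) := by
      abel
    rw [e1, e2, det_add_vecMulVec _ hPAC, det_add_vecMulVec _ hPC]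
    have hanti : (V a) ⬝ᵥ ((P + A + C)⁻¹ *ᵥ (V a)) ≤ (V a) ⬝ᵥ ((P + C)⁻¹ *ᵥ (V a)) := by
      have h : P + A + C = (P + C) + A := by abel
      rw [h]
      exact quad_inv_antitone (P + C) A hPC hA (V a)
    have hq1 : 0 ≤ (V a) ⬝ᵥ ((P + A + C)⁻¹ *ᵥ (V a)) := quad_nonneg hPAC.inv.posSemidef _
    have hq2 : 0 ≤ (V a) ⬝ᵥ ((P + C)⁻¹ *ᵥ (V a)) := quad_nonneg hPC.inv.posSemidef _
    have ih' : (P + A + C).det * P.det ≤ (P + A).det * (P + C).det := ih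
    have k1 : (P + A + C).det * P.det * ((V a) ⬝ᵥ ((P + A + C)⁻¹ *ᵥ (V a)))
        ≤ (P + A + C).det * P.det * ((V a) ⬝ᵥ ((P + C)⁻¹ *ᵥ (V a))) :=
      mul_le_mul_of_nonneg_left hanti
        (mul_nonneg hPAC.det_pos.le hP.det_pos.le)
    have k2 : (P + A + C).det * P.det * ((V a) ⬝ᵥ ((P + C)⁻¹ *ᵥ (V a)))
        ≤ (P + A).det * (P + C).det * ((V a) ⬝ᵥ ((P + C)⁻¹ *ᵥ (V a))) :=
      mul_le_mul_of_nonneg_right ih' hq2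
    nlinarith [k1, k2, ih']

/-! ### The set function `f S = log det (1 + ∑_{e ∈ S} M e)` -/

section fdet

variable {ι : Type*} [DecidableEq ι]

lemma posDef_one_add_sum (M : ι → Matrix (Fin n) (Fin n) ℝ) (hM : ∀ e, (M e).PosSemidef)
    (S : Finset ι) : (1 + ∑ e ∈ S, M e).PosDef :=
  Matrix.PosDef.one.add_posSemidef (psd_sum S _ fun i _ => hM i)

lemma one_le_det_one_add_sum (M : ι → Matrix (Fin n) (Fin n) ℝ) (hM : ∀ e, (M e).PosSemidef)
    (S : Finset ι) : 1 ≤ (1 + ∑ e ∈ S, M e).det := by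
  have := det_le_det_add 1 (∑ e ∈ S, M e) Matrix.PosDef.one (psd_sum S _ fun i _ => hM i)
  simpa using this

lemma fdet_nonneg (M : ι → Matrix (Fin n) (Fin n) ℝ) (hM : ∀ e, (M e).PosSemidef)
    (S : Finset ι) : 0 ≤ Real.log (1 + ∑ e ∈ S, M e).det :=
  Real.log_nonneg (one_le_det_one_add_sum M hM S)

lemma fdet_mono (M : ι → Matrix (Fin n) (Fin n) ℝ) (hM : ∀ e, (M e).PosSemidef)
    {S T : Finset ι} (hST : S ⊆ T) :
    Real.log (1 + ∑ e ∈ S, M e).det ≤ Real.log (1 + ∑ e ∈ T, M e).det := by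
  have hsum : ∑ e ∈ T, M e = (∑ e ∈ S, M e) + ∑ e ∈ T \ S, M e := by
    rw [add_comm, Finset.sum_sdiff hST]
  have hP := posDef_one_add_sum M hM S
  have hle : (1 + ∑ e ∈ S, M e).det ≤ (1 + ∑ e ∈ T, M e).det := by
    rw [hsum, ← add_assoc]
    exact det_le_det_add _ _ hP (psd_sum _ _ fun i _ => hM i)
  exact Real.log_le_log hP.det_pos hle

lemma fdet_submod (M : ι → Matrix (Fin n) (Fin n) ℝ) (hM : ∀ e, (M e).PosSemidef)
    (S T : Finset ι) :
    Real.log (1 + ∑ e ∈ S ∪ T, M e).det + Real.log (1 + ∑ e ∈ S ∩ T, M e).det ≤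
      Real.log (1 + ∑ e ∈ S, M e).det + Real.log (1 + ∑ e ∈ T, M e).det := by
  set P : Matrix (Fin n) (Fin n) ℝ := 1 + ∑ e ∈ S ∩ T, M e with hPdef
  set A : Matrix (Fin n) (Fin n) ℝ := ∑ e ∈ S \ T, M e with hAdef
  set B : Matrix (Fin n) (Fin n) ℝ := ∑ e ∈ T \ S, M e with hBdef
  have hP : P.PosDef := posDef_one_add_sum M hM (S ∩ T)
  have hA : A.PosSemidef := psd_sum _ _ fun i _ => hM i
  have hB : B.PosSemidef := psd_sum _ _ fun i _ => hM i
  have eS : (1 : Matrix (Fin n) (Fin n) ℝ) + ∑ e ∈ S, M e = P + A := by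
    rw [hPdef, hAdef, add_assoc]
    congr 1
    have h1 : S \ T = S \ (S ∩ T) := (Finset.sdiff_inter_self_left S T).symm
    rw [h1, add_comm]
    exact (Finset.sum_sdiff Finset.inter_subset_left).symm
  have eT : (1 : Matrix (Fin n) (Fin n) ℝ) + ∑ e ∈ T, M e = P + B := by
    rw [hPdef, hBdef, add_assoc]
    congr 1
    have h1 : T \ S = T \ (T ∩ S) := (Finset.sdiff_inter_self_left T S).symm
    rw [h1, add_comm, Finset.inter_comm S T]
    exact (Finset.sum_sdiff Finset.inter_subset_left).symm
  have eU : (1 : Matrix (Fin n) (Fin n) ℝ) + ∑ e ∈ S ∪ T, M e = P + A + B := by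
    rw [hPdef, hAdef, hBdef]
    have h : S ∪ T = (S ∩ T) ∪ (S \ T) ∪ (T \ S) := by
      ext x
      simp only [Finset.mem_union, Finset.mem_inter, Finset.mem_sdiff]
      tauto
    rw [h, Finset.sum_union, Finset.sum_union]
    · abel
    · simp only [Finset.disjoint_left, Finset.mem_inter, Finset.mem_sdiff]
      tauto
    · simp only [Finset.disjoint_left, Finset.mem_union, Finset.mem_inter, Finset.mem_sdiff]
      tauto
  rw [eS, eT, eU]
  have hPA : (P + A).PosDef := hP.add_posSemidef hA
  have hPB : (P + B).PosDef := hP.add_posSemidef hB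
  have hPAB : (P + A + B).PosDef := hPA.add_posSemidef hB
  have hdet := det_submodular P A B hP hA hB
  have hlog := Real.log_le_log (mul_pos hPAB.det_pos hP.det_pos) hdet
  rw [Real.log_mul hPAB.det_pos.ne' hP.det_pos.ne',
    Real.log_mul hPA.det_pos.ne' hPB.det_pos.ne'] at hlog
  linarith

end fdet

end CappedLogdetAux

open CappedLogdetAux in
/-- the capped log-det function
`g(A) = min_{R⊆A} ( log det(I + Σ_{e∈A\R} M_e) + Σ_{e∈R} N_e )`, with each
`M_e` positive semidefinite and caps `N_e ≥ 0`, is a rank function: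
normalized, monotone and submodular. -/
theorem capped_logdet_rank_function {ι : Type*} [Fintype ι] [DecidableEq ι]
    {n : ℕ} (M : ι → Matrix (Fin n) (Fin n) ℝ) (hM : ∀ e, (M e).PosSemidef)
    (N : ι → ℝ) (hN : ∀ e, 0 ≤ N e)
    (g : Finset ι → ℝ)
    (hg : ∀ A : Finset ι,
      g A = A.powerset.inf' (Finset.powerset_nonempty A)
        (fun R => Real.log (Matrix.det (1 + ∑ e ∈ A \ R, M e)) + ∑ e ∈ R, N e)) :
    g ∅ = 0 ∧
    (∀ A, 0 ≤ g A) ∧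
    (∀ A B : Finset ι, A ⊆ B → g A ≤ g B) ∧
    (∀ A B : Finset ι, A ⊆ B → ∀ e ∉ B,
      g (insert e A) - g A ≥ g (insert e B) - g B) := by
  -- the term function
  set φ : Finset ι → Finset ι → ℝ :=
    fun A R => Real.log (Matrix.det (1 + ∑ e ∈ A \ R, M e)) + ∑ e ∈ R, N e with hφ
  have hgφ : ∀ A : Finset ι,
      g A = A.powerset.inf' (Finset.powerset_nonempty A) (φ A) := hg
  have hg_le : ∀ (A R : Finset ι), R ⊆ A → g A ≤ φ A R := by
    intro A R hR
    rw [hgφ A]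
    exact Finset.inf'_le _ (Finset.mem_powerset.mpr hR)
  have hg_ex : ∀ A : Finset ι, ∃ R ⊆ A, g A = φ A R := by
    intro A
    obtain ⟨R, hR, hval⟩ := Finset.exists_mem_eq_inf' (Finset.powerset_nonempty A) (φ A)
    exact ⟨R, Finset.mem_powerset.mp hR, by rw [hgφ A]; exact hval⟩
  have hNsum : ∀ R : Finset ι, 0 ≤ ∑ e ∈ R, N e :=
    fun R => Finset.sum_nonneg fun e _ => hN e
  have hpos : ∀ A, 0 ≤ g A := by
    intro A
    rw [hgφ A]
    apply Finset.le_inf'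
    intro R _
    exact add_nonneg (fdet_nonneg M hM _) (hNsum R)
  refine ⟨?_, hpos, ?_, ?_⟩
  · -- normalization
    refine le_antisymm ?_ (hpos ∅)
    have h := hg_le ∅ ∅ (Finset.Subset.refl ∅)
    simpa [hφ] using h
  · -- monotonicity
    intro A B hAB
    obtain ⟨R, hRB, hgB⟩ := hg_ex B
    have h1 : g A ≤ φ A (R ∩ A) := hg_le A (R ∩ A) (Finset.inter_subset_right)
    have h2 : A \ (R ∩ A) = A \ R := by
      ext x
      simp only [Finset.mem_sdiff, Finset.mem_inter]
      tauto
    rw [hgB]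
    refine le_trans h1 ?_
    rw [hφ]
    simp only
    rw [h2]
    have h3 : Real.log (Matrix.det (1 + ∑ e ∈ A \ R, M e))
        ≤ Real.log (Matrix.det (1 + ∑ e ∈ B \ R, M e)) :=
      fdet_mono M hM (Finset.sdiff_subset_sdiff hAB (le_refl R))
    have h4 : ∑ e ∈ R ∩ A, N e ≤ ∑ e ∈ R, N e :=
      Finset.sum_le_sum_of_subset_of_nonneg (Finset.inter_subset_left)
        fun e _ _ => hN e
    linarith
  · -- submodularity
    intro A B hAB e he
    rw [ge_iff_le, sub_le_sub_iff]
    -- goal : g (insert e B) + g A ≤ g (insert e A) + g B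
    obtain ⟨R1, hR1, hgA'⟩ := hg_ex (insert e A)
    obtain ⟨R2, hR2, hgB⟩ := hg_ex B
    set S : Finset ι := insert e A \ R1 with hSdef
    set T : Finset ι := B \ R2 with hTdef
    have hSsub : S ⊆ insert e A := Finset.sdiff_subset
    have hTsub : T ⊆ B := Finset.sdiff_subset
    have hSsub' : S ⊆ insert e B := hSsub.trans (Finset.insert_subset_insert e hAB)
    have hTsub' : T ⊆ insert e B := hTsub.trans (Finset.subset_insert e B)
    have hUsub : S ∪ T ⊆ insert e B := Finset.union_subset hSsub' hTsub'
    have hIsubA : S ∩ T ⊆ A := by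
      intro x hx
      rw [Finset.mem_inter] at hx
      have hxB : x ∈ B := hTsub hx.2
      have hxA' : x ∈ insert e A := hSsub hx.1
      rcases Finset.mem_insert.mp hxA' with h | h
      · exact absurd (h ▸ hxB) he
      · exact h
    -- candidate removal sets
    have c1 : g (insert e B) ≤ φ (insert e B) (insert e B \ (S ∪ T)) :=
      hg_le _ _ Finset.sdiff_subset
    have c2 : g A ≤ φ A (A \ (S ∩ T)) := hg_le _ _ Finset.sdiff_subset
    have d1 : insert e B \ (insert e B \ (S ∪ T)) = S ∪ T := by
      rw [Finset.sdiff_sdiff_self_left, Finset.inter_eq_right.mpr hUsub]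
    have d2 : A \ (A \ (S ∩ T)) = S ∩ T := by
      rw [Finset.sdiff_sdiff_self_left, Finset.inter_eq_right.mpr hIsubA]
    -- log-det part
    have hf : Real.log (Matrix.det (1 + ∑ x ∈ S ∪ T, M x))
          + Real.log (Matrix.det (1 + ∑ x ∈ S ∩ T, M x))
        ≤ Real.log (Matrix.det (1 + ∑ x ∈ S, M x))
          + Real.log (Matrix.det (1 + ∑ x ∈ T, M x)) := fdet_submod M hM S T
    -- modular part
    have hmod : ∑ x ∈ insert e B \ (S ∪ T), N x + ∑ x ∈ A \ (S ∩ T), N x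
        = ∑ x ∈ R1, N x + ∑ x ∈ R2, N x := by
      have hi1 : insert e A ∪ B = insert e B := by
        rw [Finset.insert_union, Finset.union_eq_right.mpr hAB]
      have hi2 : insert e A ∩ B = A := by
        ext x
        simp only [Finset.mem_inter, Finset.mem_insert]
        constructor
        · rintro ⟨h | h, hB⟩
          · exact absurd (h ▸ hB) he
          · exact h
        · intro h; exact ⟨Or.inr h, hAB h⟩
      have e1 : ∑ x ∈ insert e B \ (S ∪ T), N x
          = ∑ x ∈ insert e B, N x - ∑ x ∈ S ∪ T, N x :=
        Finset.sum_sdiff_eq_sub hUsub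
      have e2 : ∑ x ∈ A \ (S ∩ T), N x = ∑ x ∈ A, N x - ∑ x ∈ S ∩ T, N x :=
        Finset.sum_sdiff_eq_sub hIsubA
      have e3 : ∑ x ∈ S ∪ T, N x + ∑ x ∈ S ∩ T, N x = ∑ x ∈ S, N x + ∑ x ∈ T, N x :=
        Finset.sum_union_inter
      have e4 : ∑ x ∈ S, N x = ∑ x ∈ insert e A, N x - ∑ x ∈ R1, N x :=
        Finset.sum_sdiff_eq_sub hR1
      have e5 : ∑ x ∈ T, N x = ∑ x ∈ B, N x - ∑ x ∈ R2, N x :=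
        Finset.sum_sdiff_eq_sub hR2
      have e6 : ∑ x ∈ insert e B, N x + ∑ x ∈ A, N x
          = ∑ x ∈ insert e A, N x + ∑ x ∈ B, N x := by
        have h := Finset.sum_union_inter (s₁ := insert e A) (s₂ := B) (f := N)
        rw [hi1, hi2] at h
        exact h
      linarith
    -- combine
    rw [hgA', hgB]
    have hc1' : φ (insert e B) (insert e B \ (S ∪ T))
        = Real.log (Matrix.det (1 + ∑ x ∈ S ∪ T, M x))
          + ∑ x ∈ insert e B \ (S ∪ T), N x := by
      rw [hφ]; simp only; rw [d1]
    have hc2' : φ A (A \ (S ∩ T))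
        = Real.log (Matrix.det (1 + ∑ x ∈ S ∩ T, M x)) + ∑ x ∈ A \ (S ∩ T), N x := by
      rw [hφ]; simp only; rw [d2]
    have hφ1 : φ (insert e A) R1
        = Real.log (Matrix.det (1 + ∑ x ∈ S, M x)) + ∑ x ∈ R1, N x := by
      rw [hφ]
    have hφ2 : φ B R2
        = Real.log (Matrix.det (1 + ∑ x ∈ T, M x)) + ∑ x ∈ R2, N x := by
      rw [hφ]
    rw [hc1'] at c1
    rw [hc2'] at c2
    rw [hφ1, hφ2]
    linarith
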